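/- Let κ > 0 and set a₁ = 2κ², a₂ = −κ⁴ (so that a₁² + 4a₂ = 0). Let W = so(4) × (ℝ³ × ℝ³) with the bracket [(A₁,(z₁,y₁)),(A₂,(z₂,y₂))] = (A₁A₂ − A₂A₁, θ(A₁)(z₂,y₂) − θ(A₂)(z₁,y₁)), where for the element A of so(4) with block form (★⁻¹w, x; −xᵀ, 0) one defines θ(A)(z,y) = (w×z − x×y, w×y − x×z). Then the linear map φ : 𝔤(a₁,a₂) → W given by φ(x,y,z,w) = ((★⁻¹(w + κ²y), −κx − κ³z; (κx + κ³z)ᵀ, 0), ((3/2)κ³·z + (κ/2)·x, κ²·y)) is bijective and satisfies φ([u,v]) = [φ(u), φ(v)] for all u, v. In particular 𝔤(2κ², −κ⁴) is isomorphic to the semidirect product so(4) ⋉_θ (ℝ³ × ℝ³). -/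
import Mathlib


open Matrix

/-- The cross product on `ℝ³`. -/
def cross (x y : Fin 3 → ℝ) : Fin 3 → ℝ :=
  ![x 1 * y 2 - x 2 * y 1, x 2 * y 0 - x 0 * y 2, x 0 * y 1 - x 1 * y 0]

abbrev V3 := Fin 3 → ℝ

/-- The underlying space `ℝ³ × ℝ³ × ℝ³ × ℝ³` of `𝔤(a₁, a₂)`. -/
abbrev G4 := V3 × V3 × V3 × V3

/-- The bracket of `𝔤(a₁, a₂)`, the Lie algebra of the isometry group of the
sub-Riemannian model space `𝖢₃,₃(a₁,a₂)`. -/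
def gBracket (a₁ a₂ : ℝ) (u v : G4) : G4 :=
  let x₁ := u.1; let y₁ := u.2.1; let z₁ := u.2.2.1; let w₁ := u.2.2.2
  let x₂ := v.1; let y₂ := v.2.1; let z₂ := v.2.2.1; let w₂ := v.2.2.2
  ( cross w₁ x₂ + cross x₁ w₂ + a₂ • (cross y₁ z₂ + cross z₁ y₂),
    cross w₁ y₂ + cross y₁ w₂ + cross x₁ x₂
      + a₁ • (cross x₁ z₂ + cross z₁ x₂ + cross y₁ y₂ + a₁ • cross z₁ z₂)
      + a₂ • cross z₁ z₂,
    cross w₁ z₂ + cross z₁ w₂ + cross x₁ y₂ + cross y₁ x₂ + a₁ • (cross y₁ z₂ + cross z₁ y₂),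
    cross w₁ w₂ + a₂ • (cross x₁ z₂ + cross z₁ x₂ + cross y₁ y₂ + a₁ • cross z₁ z₂) )

/-- The hat map `★⁻¹ : ℝ³ → so(3)`, with `(★⁻¹ v) u = v × u`. -/
def hat (v : V3) : Matrix (Fin 3) (Fin 3) ℝ :=
  Matrix.of ![![0, -v 2, v 1], ![v 2, 0, -v 0], ![-v 1, v 0, 0]]

/-- The space of 4×4 real matrices paired with `ℝ³ × ℝ³`; the first factor contains
`so(4)` as the skew-symmetric matrices. -/
abbrev W12 := Matrix (Fin 3 ⊕ Fin 1) (Fin 3 ⊕ Fin 1) ℝ × (V3 × V3)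

/-- The action `θ` of `so(4)` on `ℝ³ × ℝ³`: for `A` with block form `(★⁻¹w, x; −xᵀ, 0)`,
`θ(A)(z,y) = (w×z − x×y, w×y − x×z)`. -/
def theta (A : Matrix (Fin 3 ⊕ Fin 1) (Fin 3 ⊕ Fin 1) ℝ) (p : V3 × V3) : V3 × V3 :=
  let w : V3 := ![A (Sum.inl 2) (Sum.inl 1), A (Sum.inl 0) (Sum.inl 2), A (Sum.inl 1) (Sum.inl 0)]
  let x : V3 := fun i => A (Sum.inl i) (Sum.inr 0)
  (cross w p.1 - cross x p.2, cross w p.2 - cross x p.1)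

/-- The semidirect-product bracket on `so(4) ⋉_θ (ℝ³ × ℝ³)`:
`[(A₁,p₁),(A₂,p₂)] = (A₁A₂ − A₂A₁, θ(A₁)p₂ − θ(A₂)p₁)`. -/
def wBracket (P Q : W12) : W12 :=
  (P.1 * Q.1 - Q.1 * P.1, theta P.1 Q.2 - theta Q.1 P.2)

/-- The map `φ : 𝔤(2κ², −κ⁴) → so(4) ⋉_θ (ℝ³ × ℝ³)`. -/
noncomputable def phi12 (κ : ℝ) (u : G4) : W12 :=
  ( Matrix.fromBlocks (hat (u.2.2.2 + κ ^ 2 • u.2.1))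
      (Matrix.of fun i _ => -(κ • u.1 + κ ^ 3 • u.2.2.1) i)
      (Matrix.of fun _ j => (κ • u.1 + κ ^ 3 • u.2.2.1) j) 0,
    ((3 / 2 * κ ^ 3) • u.2.2.1 + (κ / 2) • u.1, κ ^ 2 • u.2.1) )

/-- helper block matrix -/
def MM (a b : V3) : Matrix (Fin 3 ⊕ Fin 1) (Fin 3 ⊕ Fin 1) ℝ :=
  Matrix.fromBlocks (hat a) (Matrix.of fun i _ => -b i) (Matrix.of fun _ j => b j) 0

lemma phi12_eq (κ : ℝ) (u : G4) :
    phi12 κ u = (MM (u.2.2.2 + κ ^ 2 • u.2.1) (κ • u.1 + κ ^ 3 • u.2.2.1),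
      ((3 / 2 * κ ^ 3) • u.2.2.1 + (κ / 2) • u.1, κ ^ 2 • u.2.1)) := rfl

lemma Mcomm (a b a' b' : V3) :
    MM a b * MM a' b' - MM a' b' * MM a b
      = MM (cross a a' + cross b b') (cross a b' - cross a' b) := by
  unfold MM
  ext i j
  rcases i with i | i <;> rcases j with j | j <;>
    fin_cases i <;> fin_cases j <;>
      simp [Matrix.mul_apply, Fintype.sum_sum_type, Fin.sum_univ_three, hat, cross,
        Matrix.fromBlocks] <;> ring

lemma theta_MM (a b : V3) (p : V3 × V3) :
    theta (MM a b) p = (cross a p.1 + cross b p.2, cross a p.2 + cross b p.1) := by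
  unfold theta MM
  refine Prod.ext ?_ ?_ <;> funext i <;> fin_cases i <;>
    simp [hat, cross, Matrix.fromBlocks] <;> ring

set_option maxHeartbeats 1000000 in
lemma hom12 (κ : ℝ) (u v : G4) :
    phi12 κ (gBracket (2 * κ ^ 2) (-κ ^ 4) u v) = wBracket (phi12 κ u) (phi12 κ v) := by
  obtain ⟨x₁, y₁, z₁, w₁⟩ := u
  obtain ⟨x₂, y₂, z₂, w₂⟩ := v
  rw [wBracket, phi12_eq, phi12_eq, phi12_eq]
  simp only [Mcomm, theta_MM]
  refine Prod.ext ?_ (Prod.ext ?_ ?_)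
  · show MM _ _ = MM _ _
    congr 1 <;> funext i <;> fin_cases i <;>
      simp [gBracket, cross, Pi.add_apply, Pi.sub_apply, Pi.smul_apply, smul_eq_mul] <;> ring
  · show _ = _ - _
    funext i; fin_cases i <;>
      simp [gBracket, cross, Pi.add_apply, Pi.sub_apply, Pi.smul_apply, smul_eq_mul] <;> ring
  · show _ = _ - _
    funext i; fin_cases i <;>
      simp [gBracket, cross, Pi.add_apply, Pi.sub_apply, Pi.smul_apply, smul_eq_mul] <;> ring

noncomputable def psi12 (κ : ℝ) (P : W12) : G4 :=
  let w' : V3 := ![P.1 (Sum.inl 2) (Sum.inl 1), P.1 (Sum.inl 0) (Sum.inl 2),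
    P.1 (Sum.inl 1) (Sum.inl 0)]
  let x' : V3 := fun i => P.1 (Sum.inl i) (Sum.inr 0)
  ( -(κ⁻¹ • ((3 / 2 : ℝ) • x' + P.2.1)),
    (κ ^ 2)⁻¹ • P.2.2,
    (κ ^ 3)⁻¹ • (P.2.1 + (1 / 2 : ℝ) • x'),
    w' - P.2.2 )

lemma left_inv (κ : ℝ) (hκ : κ ≠ 0) (u : G4) : psi12 κ (phi12 κ u) = u := by
  obtain ⟨x, y, z, w⟩ := u
  unfold psi12 phi12
  refine Prod.ext ?_ (Prod.ext ?_ (Prod.ext ?_ ?_)) <;> funext i <;> fin_cases i <;>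
    simp [hat, Matrix.fromBlocks, Pi.add_apply, Pi.smul_apply, smul_eq_mul] <;>
    field_simp <;> ring

lemma maps_to_skew (κ : ℝ) (u : G4) : (phi12 κ u).1ᵀ = -(phi12 κ u).1 := by
  rw [phi12_eq]
  ext i j
  rcases i with i | i <;> rcases j with j | j <;> fin_cases i <;> fin_cases j <;>
    simp [MM, hat, Matrix.fromBlocks, Matrix.transpose_apply] <;> ring

set_option maxHeartbeats 2000000 in
lemma right_inv (κ : ℝ) (hκ : κ ≠ 0) (P : W12) (hP : P.1ᵀ = -P.1) :
    phi12 κ (psi12 κ P) = P := by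
  obtain ⟨A, p, q⟩ := P
  have h : ∀ i j, A j i = -A i j := fun i j => by
    have := congrFun (congrFun hP i) j
    simpa [Matrix.transpose_apply] using this
  have ha : (psi12 κ (A, p, q)).2.2.2 + κ ^ 2 • (psi12 κ (A, p, q)).2.1
      = ![A (Sum.inl 2) (Sum.inl 1), A (Sum.inl 0) (Sum.inl 2), A (Sum.inl 1) (Sum.inl 0)] := by
    funext i
    fin_cases i <;> simp [psi12, Pi.add_apply, Pi.sub_apply, Pi.smul_apply, smul_eq_mul,
        Matrix.vecHead, Matrix.vecTail] <;> field_simp <;> try ring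
  have hb : κ • (psi12 κ (A, p, q)).1 + κ ^ 3 • (psi12 κ (A, p, q)).2.2.1
      = fun i => -A (Sum.inl i) (Sum.inr 0) := by
    funext i
    fin_cases i <;> simp [psi12, Pi.add_apply, Pi.smul_apply, Pi.neg_apply, smul_eq_mul] <;>
      field_simp <;> ring
  rw [phi12_eq, ha, hb]
  refine Prod.ext ?_ (Prod.ext ?_ ?_)
  · show MM _ _ = A
    ext i j
    rcases i with i | i <;> rcases j with j | j <;> fin_cases i <;> fin_cases j <;>
      simp [MM, hat, Matrix.fromBlocks] <;>
      linarith [h (Sum.inl 0) (Sum.inl 0), h (Sum.inl 1) (Sum.inl 1), h (Sum.inl 2) (Sum.inl 2),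
        h (Sum.inl 0) (Sum.inl 1), h (Sum.inl 0) (Sum.inl 2), h (Sum.inl 1) (Sum.inl 2),
        h (Sum.inl 0) (Sum.inr 0), h (Sum.inl 1) (Sum.inr 0), h (Sum.inl 2) (Sum.inr 0),
        h (Sum.inr 0) (Sum.inr 0)]
  · show _ = p
    funext i
    fin_cases i <;> simp [psi12, Pi.add_apply, Pi.smul_apply, Pi.neg_apply, smul_eq_mul] <;>
      field_simp <;> ring
  · show κ ^ 2 • (psi12 κ (A, p, q)).2.1 = q
    funext i
    fin_cases i <;> simp [psi12, Pi.smul_apply, smul_eq_mul] <;> field_simp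

/-- For `κ > 0`, `φ` is a bijection from `𝔤(2κ², −κ⁴)` onto `so(4) × (ℝ³ × ℝ³)` sending the
bracket of `𝔤(2κ², −κ⁴)` to the semidirect-product bracket: `𝔤(2κ², −κ⁴)` is isomorphic to
`so(4) ⋉_θ (ℝ³ × ℝ³)`. -/
theorem stmt_12 (κ : ℝ) (hκ : 0 < κ) :
    Set.BijOn (phi12 κ) Set.univ {P : W12 | P.1ᵀ = -P.1}
    ∧ ∀ u v : G4,
        phi12 κ (gBracket (2 * κ ^ 2) (-κ ^ 4) u v) = wBracket (phi12 κ u) (phi12 κ v) := by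
  have hκ' : κ ≠ 0 := ne_of_gt hκ
  refine ⟨Set.InvOn.bijOn ⟨fun u _ => left_inv κ hκ' u, fun P hP => right_inv κ hκ' P hP⟩
    (fun u _ => maps_to_skew κ u) (fun P _ => Set.mem_univ _), hom12 κ⟩
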